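/- If σ is a permutation of {1,...,n} avoiding 231 and 3124 with 1 < σ(1) < n, then σ(2) = σ(1) - 1. -/
import Mathlib


/-- `σ` avoids the pattern 231: no indices `i < j < k` with `σ k < σ i < σ j`. -/
def Avoids231 {n : ℕ} (σ : Equiv.Perm (Fin n)) : Prop :=
  ¬ ∃ i j k : Fin n, i < j ∧ j < k ∧ σ k < σ i ∧ σ i < σ j

/-- `σ` avoids the pattern 3124: no indices `i < j < k < l` with
`σ j < σ k < σ i < σ l`. -/
def Avoids3124 {n : ℕ} (σ : Equiv.Perm (Fin n)) : Prop :=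
  ¬ ∃ i j k l : Fin n, i < j ∧ j < k ∧ k < l ∧ σ j < σ k ∧ σ k < σ i ∧ σ i < σ l

/-- If a (231,3124)-avoiding permutation `σ` of `[n]` has first value strictly
between `1` and `n`, then its second value is the first value minus one
(0-indexed: `0 < σ 0 < n - 1` implies `σ 1 = σ 0 - 1`). -/
theorem stmt_17 (n : ℕ) (hn : 2 ≤ n) (σ : Equiv.Perm (Fin n))
    (h1 : Avoids231 σ) (h2 : Avoids3124 σ)
    (hlo : 0 < (σ ⟨0, by omega⟩ : ℕ)) (hhi : (σ ⟨0, by omega⟩ : ℕ) < n - 1) :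
    (σ ⟨1, by omega⟩ : ℕ) = (σ ⟨0, by omega⟩ : ℕ) - 1 := by
  set z : Fin n := ⟨0, by omega⟩ with hz
  set o : Fin n := ⟨1, by omega⟩ with ho
  set a : ℕ := (σ z : ℕ) with ha
  have hzo : z < o := Fin.lt_def.2 (by simp [hz, ho])
  obtain ⟨p, hsp⟩ : ∃ p : Fin n, (σ p : ℕ) = a - 1 :=
    ⟨σ.symm ⟨a - 1, by omega⟩, by simp⟩
  obtain ⟨q, hsq⟩ : ∃ q : Fin n, (σ q : ℕ) = a + 1 :=
    ⟨σ.symm ⟨a + 1, by omega⟩, by simp⟩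
  have hpz : p ≠ z := fun h => by rw [h] at hsp; omega
  have hqz : q ≠ z := fun h => by rw [h] at hsq; omega
  have hp1 : 1 ≤ (p : ℕ) := by
    by_contra h; exact hpz (Fin.ext (by simp [hz]; omega))
  have hq1 : 1 ≤ (q : ℕ) := by
    by_contra h; exact hqz (Fin.ext (by simp [hz]; omega))
  have hzp : z < p := Fin.lt_def.2 (by simp [hz]; omega)
  have hzq : z < q := Fin.lt_def.2 (by simp [hz]; omega)
  have hpq : p < q := by
    rcases lt_trichotomy p q with h | h | h
    · exact h
    · exfalso; rw [h] at hsp; omega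
    · exact absurd ⟨z, q, p, hzq, h, Fin.lt_def.2 (by omega), Fin.lt_def.2 (by omega)⟩ h1
  by_cases hpo : p = o
  · rw [← hpo]; exact hsp
  exfalso
  have hp2 : 1 < (p : ℕ) := by
    rcases Nat.lt_or_ge 1 (p : ℕ) with h | h
    · exact h
    · exact absurd (Fin.ext (by simp [ho]; omega)) hpo
  have hop : o < p := Fin.lt_def.2 (by simp [ho]; omega)
  have hoz : (σ o : ℕ) ≠ a := fun h => by
    have := σ.injective (Fin.ext h : σ o = σ z)
    rw [this] at ho; exact absurd (congrArg Fin.val ho) (by simp [hz])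
  have hoa : (σ o : ℕ) < a := by
    by_contra h
    push_neg at h
    exact absurd ⟨z, o, p, hzo, hop, Fin.lt_def.2 (by omega), Fin.lt_def.2 (by omega)⟩ h1
  have hoap : (σ o : ℕ) ≠ a - 1 := fun h => by
    have : σ o = σ p := Fin.ext (by omega)
    exact hpo (σ.injective this).symm
  exact absurd ⟨z, o, p, q, hzo, hop, hpq, Fin.lt_def.2 (by omega), Fin.lt_def.2 (by omega),
    Fin.lt_def.2 (by omega)⟩ h2
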